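/- Let p ≥ 2 and β ≥ 1. Let μ₁, …, μ_r be probability measures on ℝ^d, each with finite p-th moment and each satisfying (∫|⟨x,v⟩|^p dμ_i(x))^{1/p} ≤ β (∫|⟨x,v⟩|² dμ_i(x))^{1/2} for all v ∈ ℝ^d. Let α₁, …, α_r > 0 with Σ_{i=1}^r α_i = 1. Then the mixture μ = Σ_{i=1}^r α_i μ_i satisfies (∫|⟨x,v⟩|^p dμ(x))^{1/p} ≤ β · (max_{1 ≤ i ≤ r} α_i^{(1/p)−(1/2)}) · (∫|⟨x,v⟩|² dμ(x))^{1/2} for all v ∈ ℝ^d. -/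

import Mathlib

open MeasureTheory
open scoped ENNReal RealInnerProductSpace Classical

noncomputable section

/-- The outer product `x xᵀ` of a vector in Euclidean space, as a matrix. -/
def outer {d : ℕ} (x : EuclideanSpace ℝ (Fin d)) : Matrix (Fin d) (Fin d) ℝ :=
  Matrix.of fun i j => x i * x j

/-- The trace inner product `⟨A, B⟩ = Tr (A B)` on symmetric matrices. -/
def minner {d : ℕ} (A B : Matrix (Fin d) (Fin d) ℝ) : ℝ :=
  Matrix.trace (A * B)

/-- The Frobenius norm of a matrix. -/
def frobNorm {d : ℕ} (M : Matrix (Fin d) (Fin d) ℝ) : ℝ :=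
  Real.sqrt (∑ i, ∑ j, (M i j) ^ 2)

/-- Entrywise integral of a matrix-valued function. -/
def mIntegral {d : ℕ} (μ : Measure (EuclideanSpace ℝ (Fin d)))
    (F : EuclideanSpace ℝ (Fin d) → Matrix (Fin d) (Fin d) ℝ) :
    Matrix (Fin d) (Fin d) ℝ :=
  Matrix.of fun i j => ∫ x, F x i j ∂μ

/-- The fourth moment operator `T_μ (A) = ∫ ⟨A, xxᵀ⟩ xxᵀ dμ(x)`. -/
def fourthMomentOp {d : ℕ} (μ : Measure (EuclideanSpace ℝ (Fin d)))
    (A : Matrix (Fin d) (Fin d) ℝ) : Matrix (Fin d) (Fin d) ℝ :=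
  mIntegral μ (fun x => minner A (outer x) • outer x)

/-- The second moment matrix `B = ∫ xxᵀ dμ(x)`. -/
def secondMoment {d : ℕ} (μ : Measure (EuclideanSpace ℝ (Fin d))) :
    Matrix (Fin d) (Fin d) ℝ :=
  mIntegral μ outer

/-- `lam : ℕ → ℝ` lists the eigenvalues (with multiplicity) of the fourth moment operator
`T_μ`, viewed as an operator on the `d(d+1)/2`-dimensional inner product space of symmetric
matrices, in descending order, padded by `0` beyond index `d(d+1)/2`. -/
def IsEigenSeq {d : ℕ} (μ : Measure (EuclideanSpace ℝ (Fin d))) (lam : ℕ → ℝ) : Prop :=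
  Antitone lam ∧ (∀ i, d * (d + 1) / 2 ≤ i → lam i = 0) ∧
  ∃ b : Fin (d * (d + 1) / 2) → Matrix (Fin d) (Fin d) ℝ,
    (∀ i, (b i).IsSymm) ∧
    (∀ i j, minner (b i) (b j) = if i = j then 1 else 0) ∧
    (∀ A : Matrix (Fin d) (Fin d) ℝ, A.IsSymm → A ∈ Submodule.span ℝ (Set.range b)) ∧
    (∀ i : Fin (d * (d + 1) / 2), fourthMomentOp μ (b i) = lam i • b i)

/-- The second order separation parameter `s(μ)`. -/
def sep {d : ℕ} (μ : Measure (EuclideanSpace ℝ (Fin d))) : ℝ :=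
  (1 / 2) * sSup { r : ℝ | ∃ μ₁ μ₂ : Measure (EuclideanSpace ℝ (Fin d)),
    IsProbabilityMeasure μ₁ ∧ IsProbabilityMeasure μ₂ ∧
    μ = (2 : ℝ≥0∞)⁻¹ • μ₁ + (2 : ℝ≥0∞)⁻¹ • μ₂ ∧
    r = frobNorm (secondMoment μ₁ - secondMoment μ₂) }

/-- The standard Gaussian measure `N(0, I)` on `ℝ^d`. -/
def stdGaussian (d : ℕ) : Measure (EuclideanSpace ℝ (Fin d)) :=
  (Measure.pi fun _ : Fin d => ProbabilityTheory.gaussianReal 0 1).map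
    (MeasurableEquiv.toLp 2 (Fin d → ℝ))

/-- The centered Gaussian measure `N(0, B)` on `ℝ^d` with positive semidefinite
covariance matrix `B`, obtained as the pushforward of `N(0, I)` by `B^{1/2}`. -/
def gaussianCov {d : ℕ} (B : Matrix (Fin d) (Fin d) ℝ) :
    Measure (EuclideanSpace ℝ (Fin d)) :=
  if hB : B.PosSemidef then (stdGaussian d).map (fun x => Matrix.toEuclideanLin ((hB.1.eigenvectorUnitary : Matrix (Fin d) (Fin d) ℝ) *
      Matrix.diagonal ((RCLike.ofReal : ℝ → ℝ) ∘ (√·) ∘ hB.1.eigenvalues) *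
      (star hB.1.eigenvectorUnitary : Matrix (Fin d) (Fin d) ℝ)) x)
  else 0

/-- The positive semidefinite square root `B^{1/2}` of a positive semidefinite matrix. -/
def psdSqrt {d : ℕ} (B : Matrix (Fin d) (Fin d) ℝ) : Matrix (Fin d) (Fin d) ℝ :=
  if hB : B.PosSemidef then (hB.1.eigenvectorUnitary : Matrix (Fin d) (Fin d) ℝ) *
      Matrix.diagonal ((RCLike.ofReal : ℝ → ℝ) ∘ (√·) ∘ hB.1.eigenvalues) *
    (star hB.1.eigenvectorUnitary : Matrix (Fin d) (Fin d) ℝ) else 0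

/-- a finite mixture of measures satisfying `Lᵖ`-`L²` equivalence with
constant `β` satisfies it with constant `β · maxᵢ αᵢ^{1/p - 1/2}`. -/
theorem mixture_lpl2
    (d r : ℕ) (p : ℝ) (hp : 2 ≤ p) (β : ℝ) (hβ : 1 ≤ β)
    (μs : Fin r → Measure (EuclideanSpace ℝ (Fin d)))
    (hprob : ∀ i, IsProbabilityMeasure (μs i))
    (hmom : ∀ i, Integrable (fun x => ‖x‖ ^ p) (μs i))
    (hlpl2 : ∀ i, ∀ v : EuclideanSpace ℝ (Fin d),
      (∫ x, (|⟪x, v⟫|) ^ p ∂(μs i)) ^ (1 / p) ≤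
        β * (∫ x, ⟪x, v⟫ ^ 2 ∂(μs i)) ^ ((1 : ℝ) / 2))
    (α : Fin r → ℝ) (hα : ∀ i, 0 < α i) (hsum : ∑ i, α i = 1) :
    ∀ v : EuclideanSpace ℝ (Fin d),
      (∫ x, (|⟪x, v⟫|) ^ p ∂(∑ i, ENNReal.ofReal (α i) • μs i)) ^ (1 / p) ≤
        β * (⨆ i, α i ^ (1 / p - 1 / 2)) *
          (∫ x, ⟪x, v⟫ ^ 2 ∂(∑ i, ENNReal.ofReal (α i) • μs i)) ^ ((1 : ℝ) / 2) := by
  intro v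
  have hr : r ≠ 0 := by rintro rfl; simp at hsum
  haveI : NeZero r := ⟨hr⟩
  haveI := hprob
  have hp0 : (0:ℝ) < p := by linarith
  have hβ0 : (0:ℝ) < β := by linarith
  set M : ℝ := ⨆ i, α i ^ (1 / p - 1 / 2) with hM
  have hMb : BddAbove (Set.range fun i => α i ^ (1 / p - 1 / 2)) :=
    Set.Finite.bddAbove (Set.finite_range _)
  have hMle : ∀ i, α i ^ (1 / p - 1 / 2) ≤ M := fun i => le_ciSup hMb i
  have hM0 : 0 < M :=
    lt_of_lt_of_le (Real.rpow_pos_of_pos (hα (Classical.arbitrary _)) _)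
      (hMle (Classical.arbitrary _))
  set f : EuclideanSpace ℝ (Fin d) → ℝ := fun x => |⟪x, v⟫| ^ p with hfdef
  set g : EuclideanSpace ℝ (Fin d) → ℝ := fun x => ⟪x, v⟫ ^ 2 with hgdef
  have hic : Continuous fun x : EuclideanSpace ℝ (Fin d) => ⟪x, v⟫ :=
    continuous_id.inner continuous_const
  have hfc : Continuous f := hic.abs.rpow_const (fun x => Or.inr hp0.le)
  have hgc : Continuous g := hic.pow 2
  have hfi : ∀ i, Integrable f (μs i) := by
    intro i
    refine ((hmom i).const_mul (‖v‖ ^ p)).mono' hfc.aestronglyMeasurable ?_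
    filter_upwards with x
    rw [Real.norm_eq_abs, abs_of_nonneg (by positivity)]
    calc |⟪x, v⟫| ^ p ≤ (‖x‖ * ‖v‖) ^ p := by
          refine Real.rpow_le_rpow (abs_nonneg _) ?_ hp0.le
          exact abs_real_inner_le_norm x v
      _ = ‖v‖ ^ p * ‖x‖ ^ p := by
          rw [Real.mul_rpow (norm_nonneg _) (norm_nonneg _)]; ring
  have hgi : ∀ i, Integrable g (μs i) := by
    intro i
    refine (((integrable_const (1:ℝ)).add (hmom i)).const_mul (‖v‖ ^ 2)).mono'
      hgc.aestronglyMeasurable ?_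
    filter_upwards with x
    rw [Real.norm_eq_abs, hgdef]
    have h1 : |⟪x, v⟫ ^ 2| = ⟪x, v⟫ ^ 2 := abs_of_nonneg (sq_nonneg _)
    rw [h1]
    have h2 : ⟪x, v⟫ ^ 2 ≤ (‖x‖ * ‖v‖) ^ 2 := by
      rw [← sq_abs]
      exact pow_le_pow_left₀ (abs_nonneg _) (abs_real_inner_le_norm x v) 2
    have h3 : ‖x‖ ^ 2 ≤ 1 + ‖x‖ ^ p := by
      rcases le_total ‖x‖ 1 with h | h
      · have : ‖x‖ ^ 2 ≤ 1 := pow_le_one₀ (norm_nonneg _) h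
        have : (0:ℝ) ≤ ‖x‖ ^ p := Real.rpow_nonneg (norm_nonneg _) p
        linarith
      · have h4 : ‖x‖ ^ (2:ℝ) ≤ ‖x‖ ^ p := Real.rpow_le_rpow_of_exponent_le h hp
        rw [Real.rpow_two] at h4
        linarith
    calc ⟪x, v⟫ ^ 2 ≤ (‖x‖ * ‖v‖) ^ 2 := h2
      _ = ‖v‖ ^ 2 * ‖x‖ ^ 2 := by ring
      _ ≤ ‖v‖ ^ 2 * (1 + ‖x‖ ^ p) := by
          exact mul_le_mul_of_nonneg_left h3 (by positivity)
  have hmix : ∀ (h : EuclideanSpace ℝ (Fin d) → ℝ), (∀ i, Integrable h (μs i)) →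
      ∫ x, h x ∂(∑ i, ENNReal.ofReal (α i) • μs i) = ∑ i, α i * ∫ x, h x ∂(μs i) := by
    intro h hh
    rw [integral_finset_sum_measure]
    · refine Finset.sum_congr rfl fun i _ => ?_
      rw [integral_smul_measure, ENNReal.toReal_ofReal (hα i).le, smul_eq_mul]
    · exact fun i _ => (hh i).smul_measure ENNReal.ofReal_ne_top
  rw [hmix f hfi, hmix g hgi]
  set s : Fin r → ℝ := fun i => ∫ x, g x ∂(μs i) with hsdef
  have hs0 : ∀ i, 0 ≤ s i := fun i => integral_nonneg (fun x => sq_nonneg _)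
  set t : Fin r → ℝ := fun i => α i * s i with htdef
  have ht0 : ∀ i, 0 ≤ t i := fun i => mul_nonneg (hα i).le (hs0 i)
  set T : ℝ := ∑ i, t i with hT
  have hT0 : 0 ≤ T := Finset.sum_nonneg fun i _ => ht0 i
  have htT : ∀ i, t i ≤ T := fun i =>
    Finset.single_le_sum (fun j _ => ht0 j) (Finset.mem_univ i)
  -- per-component bound
  have hkey : ∀ i, α i * ∫ x, f x ∂(μs i) ≤ β ^ p * M ^ p * (t i * T ^ (p / 2 - 1)) := by
    intro i
    have hA0 : 0 ≤ ∫ x, f x ∂(μs i) :=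
      integral_nonneg fun x => Real.rpow_nonneg (abs_nonneg _) p
    have h1 : ∫ x, f x ∂(μs i) ≤ β ^ p * s i ^ (p / 2) := by
      have h2 := Real.rpow_le_rpow (Real.rpow_nonneg hA0 _) (hlpl2 i v) hp0.le
      rw [← Real.rpow_mul hA0, one_div_mul_cancel hp0.ne', Real.rpow_one] at h2
      calc ∫ x, f x ∂(μs i) ≤ (β * s i ^ ((1:ℝ)/2)) ^ p := h2
        _ = β ^ p * s i ^ (p / 2) := by
            rw [Real.mul_rpow hβ0.le (Real.rpow_nonneg (hs0 i) _),
              ← Real.rpow_mul (hs0 i)]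
            ring_nf
    have h3 : α i * s i ^ (p / 2) ≤ M ^ p * t i ^ (p / 2) := by
      have h4 : t i ^ (p / 2) = α i ^ (p / 2) * s i ^ (p / 2) :=
        Real.mul_rpow (hα i).le (hs0 i)
      have h5 : (α i ^ (1 / p - 1 / 2)) ^ p = α i ^ (1 - p / 2) := by
        rw [← Real.rpow_mul (hα i).le]
        congr 1
        field_simp
      have h6 : α i = α i ^ (1 - p / 2) * α i ^ (p / 2) := by
        rw [← Real.rpow_add (hα i)]
        norm_num
      have h7 : α i ^ (1 - p / 2) ≤ M ^ p := by
        rw [← h5]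
        exact Real.rpow_le_rpow (Real.rpow_nonneg (hα i).le _) (hMle i) hp0.le
      calc α i * s i ^ (p / 2) = α i ^ (1 - p / 2) * (α i ^ (p / 2) * s i ^ (p / 2)) := by
            rw [← mul_assoc, ← h6]
        _ ≤ M ^ p * (α i ^ (p / 2) * s i ^ (p / 2)) := by
            exact mul_le_mul_of_nonneg_right h7
              (mul_nonneg (Real.rpow_nonneg (hα i).le _) (Real.rpow_nonneg (hs0 i) _))
        _ = M ^ p * t i ^ (p / 2) := by rw [h4]
    have h8 : t i ^ (p / 2) ≤ t i * T ^ (p / 2 - 1) := by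
      rcases eq_or_lt_of_le (ht0 i) with h | h
      · rw [← h, Real.zero_rpow (by positivity : (0:ℝ) < p/2).ne', zero_mul]
      · have : t i ^ (p / 2) = t i * t i ^ (p / 2 - 1) := by
          rw [← Real.rpow_one_add' (ht0 i) (by intro hc; nlinarith)]
          · ring_nf
        rw [this]
        refine mul_le_mul_of_nonneg_left ?_ (ht0 i)
        exact Real.rpow_le_rpow h.le (htT i) (by linarith)
    calc α i * ∫ x, f x ∂(μs i) ≤ α i * (β ^ p * s i ^ (p / 2)) :=
          mul_le_mul_of_nonneg_left h1 (hα i).le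
      _ = β ^ p * (α i * s i ^ (p / 2)) := by ring
      _ ≤ β ^ p * (M ^ p * t i ^ (p / 2)) := by
          refine mul_le_mul_of_nonneg_left h3 ?_; positivity
      _ ≤ β ^ p * (M ^ p * (t i * T ^ (p / 2 - 1))) := by
          refine mul_le_mul_of_nonneg_left (mul_le_mul_of_nonneg_left h8 (by positivity)) ?_
          positivity
      _ = β ^ p * M ^ p * (t i * T ^ (p / 2 - 1)) := by ring
  have hsum2 : ∑ i, α i * ∫ x, f x ∂(μs i) ≤ β ^ p * M ^ p * T ^ (p / 2) := by
    calc ∑ i, α i * ∫ x, f x ∂(μs i)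
        ≤ ∑ i, β ^ p * M ^ p * (t i * T ^ (p / 2 - 1)) :=
          Finset.sum_le_sum fun i _ => hkey i
      _ = β ^ p * M ^ p * (T * T ^ (p / 2 - 1)) := by
          rw [← Finset.mul_sum, ← Finset.sum_mul]
      _ = β ^ p * M ^ p * T ^ (p / 2) := by
          congr 1
          rcases eq_or_lt_of_le hT0 with h | h
          · rw [← h, zero_mul, Real.zero_rpow (by positivity : (0:ℝ) < p/2).ne']
          · rw [← Real.rpow_one_add' hT0 (by intro hc; nlinarith)]
            · ring_nf
  have hL0 : 0 ≤ ∑ i, α i * ∫ x, f x ∂(μs i) :=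
    Finset.sum_nonneg fun i _ => mul_nonneg (hα i).le
      (integral_nonneg fun x => Real.rpow_nonneg (abs_nonneg _) p)
  have hfin : β ^ p * M ^ p * T ^ (p / 2) = (β * M * T ^ ((1:ℝ)/2)) ^ p := by
    rw [Real.mul_rpow (by positivity) (Real.rpow_nonneg hT0 _),
      Real.mul_rpow hβ0.le hM0.le, ← Real.rpow_mul hT0]
    ring_nf
  calc (∑ i, α i * ∫ x, f x ∂(μs i)) ^ (1 / p)
      ≤ ((β * M * T ^ ((1:ℝ)/2)) ^ p) ^ (1 / p) := by
        refine Real.rpow_le_rpow hL0 ?_ (by positivity)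
        rw [← hfin]; exact hsum2
    _ = β * M * T ^ ((1:ℝ)/2) := by
        rw [← Real.rpow_mul (by positivity), mul_one_div, div_self hp0.ne',
          Real.rpow_one]


end
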